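/- Let H be a complex Hilbert space, U a unitary bounded operator on H, P the orthogonal projection of H onto ker(U + 1), and B a bounded linear operator on H satisfying B ∘ P = 0, (U + 1) ∘ B = id - P, and B ∘ (U + 1) = id - P. Set A := i · ((U - 1) ∘ B). Then for all φ, η ∈ H, the boundary-condition equation φ - i·η = U(φ + i·η) holds if and only if P φ = 0 and η - P η = A φ. -/

import Mathlib

open scoped InnerProductSpace

/-- Splitting of the boundary condition `φ - i·η = U (φ + i·η)` into the essential part
`P φ = 0` and the natural part `η - P η = A φ`, where `P` is the orthogonal projection
onto `ker (U + 1)`, `B` is the pseudo-inverse of `U + 1`, and `A = i • ((U - 1) ∘ B)`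
is the partial Cayley transform. -/
theorem boundaryCondition_iff_essential_and_natural
    {H : Type*} [NormedAddCommGroup H] [InnerProductSpace ℂ H] [CompleteSpace H]
    (U P B : H →L[ℂ] H)
    (hU₁ : ContinuousLinearMap.adjoint U ∘L U = 1)
    (hU₂ : U ∘L ContinuousLinearMap.adjoint U = 1)
    (hP : ∀ x : H, P x ∈ LinearMap.ker ((U + 1 : H →L[ℂ] H) : H →ₗ[ℂ] H) ∧ x - P x ∈ (LinearMap.ker ((U + 1 : H →L[ℂ] H) : H →ₗ[ℂ] H))ᗮ)
    (hB₀ : B ∘L P = 0) (hB₁ : (U + 1) ∘L B = 1 - P) (hB₂ : B ∘L (U + 1) = 1 - P) :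
    ∀ φ η : H,
      φ - Complex.I • η = U (φ + Complex.I • η) ↔
        (P φ = 0 ∧ η - P η = (Complex.I • ((U - 1) ∘L B)) φ) := by
  intro φ η
  -- pointwise versions of the pseudo-inverse identities
  have e1 : U (B φ) + B φ = φ - P φ := by
    have := ContinuousLinearMap.ext_iff.mp hB₁ φ
    simpa using this
  have e2 : B (U φ) + B φ = φ - P φ := by
    have := ContinuousLinearMap.ext_iff.mp hB₂ φ
    simpa [map_add] using this
  have e3 : B (U η) + B η = η - P η := by
    have := ContinuousLinearMap.ext_iff.mp hB₂ η
    simpa [map_add] using this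
  constructor
  · intro h
    rw [map_add, map_smul] at h
    have heq : φ - U φ = Complex.I • η + Complex.I • U η := by
      linear_combination (norm := module) h
    -- the kernel element k = P φ
    set k := P φ with hkdef
    have hk : k ∈ LinearMap.ker ((U + 1 : H →L[ℂ] H) : H →ₗ[ℂ] H) := (hP φ).1
    have hUk : U k = -k := by
      have h0 : U k + k = 0 := by simpa using (LinearMap.mem_ker.mp hk)
      linear_combination (norm := module) h0
    have hadj : ContinuousLinearMap.adjoint U k = -k := by
      have h1 : ContinuousLinearMap.adjoint U (U k) = k := by
        simpa using ContinuousLinearMap.ext_iff.mp hU₁ k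
      rw [hUk, map_neg] at h1
      linear_combination (norm := module) -h1
    have c1 : (⟪k, U φ⟫_ℂ) = -(⟪k, φ⟫_ℂ) := by
      rw [← ContinuousLinearMap.adjoint_inner_left, hadj, inner_neg_left]
    have c2 : (⟪k, U η⟫_ℂ) = -(⟪k, η⟫_ℂ) := by
      rw [← ContinuousLinearMap.adjoint_inner_left, hadj, inner_neg_left]
    have hinner : (⟪k, φ⟫_ℂ) = 0 := by
      have := congrArg (fun x => (⟪k, x⟫_ℂ)) heq
      simp only [inner_sub_right, inner_add_right, inner_smul_right, c1, c2] at this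
      ring_nf at this
      linear_combination this / 2
    have horth : (⟪k, φ - k⟫_ℂ) = 0 :=
      (Submodule.mem_orthogonal _ _).mp (hP φ).2 k hk
    have hkk : (⟪k, k⟫_ℂ) = 0 := by
      rw [inner_sub_right] at horth
      linear_combination hinner - horth
    have hPφ : P φ = 0 := by
      rw [← hkdef]
      exact inner_self_eq_zero.mp hkk
    refine ⟨hPφ, ?_⟩
    -- natural part
    have e5 : U (B φ) = B (U φ) := by
      linear_combination (norm := module) e1 - e2
    have e4 : B φ - B (U φ) = Complex.I • B η + Complex.I • B (U η) := by
      have := congrArg (fun x => B x) heq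
      simpa [map_sub, map_add, map_smul] using this
    have h7 : Complex.I • (η - P η) = B φ - B (U φ) := by
      rw [← e3]
      linear_combination (norm := module) -e4
    have h8 := congrArg (fun x => Complex.I • x) h7
    simp only [smul_smul, Complex.I_mul_I, neg_one_smul, smul_sub] at h8
    show η - P η = Complex.I • ((U - 1) ∘L B) φ
    have : ((U - 1) ∘L B) φ = U (B φ) - B φ := by simp
    rw [this, e5, smul_sub]
    linear_combination (norm := module) -h8
  · rintro ⟨hPφ, hnat⟩
    have hnat' : η - P η = Complex.I • U (B φ) - Complex.I • B φ := by
      simpa [smul_sub] using hnat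
    have hker : U (P η) + P η = 0 := by
      simpa using (LinearMap.mem_ker.mp (hP η).1)
    have e1' : U (B φ) + B φ = φ := by rw [e1, hPφ, sub_zero]
    have hUe1 : U (U (B φ)) + U (B φ) = U φ := by
      have := congrArg U e1'
      simpa [map_add] using this
    have hUη : U η - U (P η) = Complex.I • U (U (B φ)) - Complex.I • U (B φ) := by
      have := congrArg U hnat'
      simpa [map_sub, map_smul] using this
    have h9 : Complex.I • η - Complex.I • P η = B φ - U (B φ) := by
      have := congrArg (fun x => Complex.I • x) hnat'
      simp only [smul_sub, smul_smul, Complex.I_mul_I, neg_one_smul] at this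
      linear_combination (norm := module) this
    have h10 : Complex.I • U η - Complex.I • U (P η) = U (B φ) - U (U (B φ)) := by
      have := congrArg (fun x => Complex.I • x) hUη
      simp only [smul_sub, smul_smul, Complex.I_mul_I, neg_one_smul] at this
      linear_combination (norm := module) this
    rw [map_add, map_smul]
    linear_combination (norm := module) -h9 - h10 - Complex.I • hker - e1' + hUe1
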